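/- The number of lattice paths from (0,0) to (mn, n) using unit north and east steps that never go strictly below the line x = my equals (1/(mn+1)) · binomial((m+1)n, n). -/

import Mathlib

/-- An `m`-ballot path of size `n`, encoded as a word of `(m+1)*n` steps
(`true` = north step, `false` = east step), read from the start of the path.
The path ends at `(m*n, n)` (so it has `n` north steps), and after each prefix
of `k` steps the current vertex `(x, y)` satisfies `x ≥ m * y`. -/
def IsBallotWord (m n : ℕ) (f : Fin ((m + 1) * n) → Bool) : Prop :=
  (Finset.univ.filter fun i => f i = true).card = n ∧
  ∀ k : ℕ, k ≤ (m + 1) * n →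
    m * (Finset.univ.filter fun i : Fin ((m + 1) * n) => (i : ℕ) < k ∧ f i = true).card
      ≤ (Finset.univ.filter fun i : Fin ((m + 1) * n) => (i : ℕ) < k ∧ f i = false).card

namespace BallotCycle
open Finset
open scoped Classical

/-- value of a step: north = `-m`, east = `+1`. -/
def val (m : ℕ) (b : Bool) : ℤ := if b then -(m : ℤ) else 1

/-- periodic extension of a word of length `L` -/
def gp (L : ℕ) (h : Fin L → Bool) (i : ℕ) : Bool :=
  if hL : 0 < L then h ⟨i % L, Nat.mod_lt _ hL⟩ else false

/-- prefix sums of the periodic extension -/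
def S (m L : ℕ) (h : Fin L → Bool) (k : ℕ) : ℤ :=
  ∑ i ∈ Finset.range k, val m (gp L h i)

/-- number of north steps -/
def wt {L : ℕ} (h : Fin L → Bool) : ℕ := (univ.filter fun i => h i = true).card

/-- cyclic rotation by `j` -/
def rot (L j : ℕ) (h : Fin L → Bool) : Fin L → Bool := fun i => gp L h ((i : ℕ) + j)

/-- `j` is a good (dominating) starting point -/
def Good (m L : ℕ) (h : Fin L → Bool) (j : ℕ) : Prop :=
  ∀ k, 0 < k → k ≤ L → S m L h j < S m L h (j + k)

lemma gp_lt {L : ℕ} (h : Fin L → Bool) {i : ℕ} (hi : i < L) : gp L h i = h ⟨i, hi⟩ := by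
  have hL : 0 < L := lt_of_le_of_lt (Nat.zero_le i) hi
  simp [gp, hL, Nat.mod_eq_of_lt hi]

lemma gp_add {L : ℕ} (h : Fin L → Bool) (i : ℕ) : gp L h (i + L) = gp L h i := by
  simp [gp, Nat.add_mod_right]

lemma S_succ (m L : ℕ) (h : Fin L → Bool) (k : ℕ) :
    S m L h (k + 1) = S m L h k + val m (gp L h k) := by
  simp [S, Finset.sum_range_succ]

lemma S_add_L (m L : ℕ) (h : Fin L → Bool) (k : ℕ) :
    S m L h (k + L) = S m L h k + S m L h L := by
  induction k with
  | zero => simp [S]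
  | succ k ih =>
      have h1 : k + 1 + L = (k + L) + 1 := by omega
      rw [h1, S_succ, S_succ, ih, gp_add]
      ring

lemma S_full (m L : ℕ) (h : Fin L → Bool) :
    S m L h L + ((m : ℤ) + 1) * wt h = L := by
  have h1 : S m L h L = ∑ i : Fin L, val m (h i) := by
    rw [S, ← Fin.sum_univ_eq_sum_range (fun i => val m (gp L h i))]
    refine Finset.sum_congr rfl fun i _ => ?_
    rw [gp_lt h i.isLt]
  have h2 : ∑ i ∈ univ.filter (fun i => h i = true), val m (h i)
        + ∑ i ∈ univ.filter (fun i => ¬ h i = true), val m (h i)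
      = ∑ i : Fin L, val m (h i) :=
    Finset.sum_filter_add_sum_filter_not _ _ _
  have h3 : ∑ i ∈ univ.filter (fun i => h i = true), val m (h i)
      = (wt h : ℤ) * (-(m : ℤ)) := by
    have hc : ∀ i ∈ univ.filter (fun i => h i = true), val m (h i) = -(m : ℤ) := by
      intro i hi
      simp [val, (Finset.mem_filter.mp hi).2]
    rw [Finset.sum_congr rfl hc, Finset.sum_const, wt]
    simp [nsmul_eq_mul]
  have h4 : ∑ i ∈ univ.filter (fun i => ¬ h i = true), val m (h i)
      = ((univ.filter fun i => ¬ h i = true).card : ℤ) := by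
    have hc : ∀ i ∈ univ.filter (fun i => ¬ h i = true), val m (h i) = 1 := by
      intro i hi
      simp [val, (Finset.mem_filter.mp hi).2]
    rw [Finset.sum_congr rfl hc, Finset.sum_const]
    simp
  have h5 : wt h + (univ.filter fun i => ¬ h i = true).card = L := by
    rw [wt, Finset.card_filter_add_card_filter_not]
    simp
  have h5' : ((wt h : ℤ)) + ((univ.filter fun i => ¬ h i = true).card : ℤ) = L := by
    exact_mod_cast h5
  rw [h1, ← h2, h3, h4]
  linarith

lemma S_L_eq_one (m n : ℕ) (h : Fin ((m + 1) * n + 1) → Bool) (hw : wt h = n) :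
    S m ((m + 1) * n + 1) h ((m + 1) * n + 1) = 1 := by
  have := S_full m ((m + 1) * n + 1) h
  rw [hw] at this
  have hc : (((m + 1) * n + 1 : ℕ) : ℤ) = ((m : ℤ) + 1) * n + 1 := by push_cast; ring
  rw [hc] at this
  linarith

lemma wt_rot (m L : ℕ) (h : Fin L → Bool) (j : ℕ) : wt (rot L j h) = wt h := by
  rcases Nat.eq_zero_or_pos L with hL | hL
  · subst hL; simp [wt]
  have hgp : ∀ i : ℕ, gp L (rot L j h) i = gp L h (i + j) := by
    intro i
    simp only [gp, rot, hL, dif_pos]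
    congr 1
    exact Fin.ext (by simp [Nat.mod_add_mod])
  have hS : S m L (rot L j h) L = S m L h L := by
    have h1 : S m L (rot L j h) L = S m L h (j + L) - S m L h j := by
      have : ∀ k, S m L (rot L j h) k = S m L h (j + k) - S m L h j := by
        intro k
        induction k with
        | zero => simp [S]
        | succ k ih =>
            rw [S_succ, ih, hgp, show j + (k + 1) = (j + k) + 1 from rfl, S_succ,
              show k + j = j + k from by omega]
            ring
      exact this L
    rw [h1, show j + L = j + L from rfl]
    have := S_add_L m L h j
    rw [show j + L = j + L from rfl] at this
    omega
  have e1 := S_full m L h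
  have e2 := S_full m L (rot L j h)
  have : ((m : ℤ) + 1) * wt (rot L j h) = ((m : ℤ) + 1) * wt h := by
    rw [hS] at e2; linarith
  have hm1 : ((m : ℤ) + 1) ≠ 0 := by positivity
  have := mul_left_cancel₀ hm1 this
  exact_mod_cast this

lemma S_rot (m L : ℕ) (hL : 0 < L) (h : Fin L → Bool) (j k : ℕ) :
    S m L (rot L j h) k = S m L h (j + k) - S m L h j := by
  have hgp : ∀ i : ℕ, gp L (rot L j h) i = gp L h (i + j) := by
    intro i
    simp only [gp, rot, hL, dif_pos]
    congr 1
    exact Fin.ext (by simp [Nat.mod_add_mod])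
  induction k with
  | zero => simp [S]
  | succ k ih =>
      rw [S_succ, ih, hgp, show j + (k + 1) = (j + k) + 1 from rfl, S_succ,
        show k + j = j + k from by omega]
      ring

lemma rot_rot (L : ℕ) (hL : 0 < L) (j j' : ℕ) (h : Fin L → Bool) :
    rot L j' (rot L j h) = rot L (j + j') h := by
  funext i
  show gp L (rot L j h) ((i : ℕ) + j') = gp L h ((i : ℕ) + (j + j'))
  have : gp L (rot L j h) ((i : ℕ) + j') = gp L h ((i : ℕ) + j' + j) := by
    simp only [gp, rot, hL, dif_pos]
    congr 1
    exact Fin.ext (by simp [Nat.mod_add_mod])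
  rw [this, show (i : ℕ) + j' + j = (i : ℕ) + (j + j') from by omega]

lemma rot_L (L : ℕ) (hL : 0 < L) (h : Fin L → Bool) : rot L L h = h := by
  funext i
  show gp L h ((i : ℕ) + L) = h i
  rw [gp_add, gp_lt h i.isLt]

lemma rot_inv (L : ℕ) (hL : 0 < L) {j : ℕ} (hj : j ≤ L) (h : Fin L → Bool) :
    rot L (L - j) (rot L j h) = h := by
  rw [rot_rot L hL, show j + (L - j) = L from by omega, rot_L L hL]

lemma good_rot_iff (m L : ℕ) (hL : 0 < L) (h : Fin L → Bool) (j : ℕ) :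
    Good m L (rot L j h) 0 ↔ Good m L h j := by
  unfold Good
  refine forall_congr' fun k => ?_
  refine imp_congr Iff.rfl (imp_congr Iff.rfl ?_)
  rw [zero_add, S_rot m L hL h j k, S_rot m L hL h j 0]
  constructor <;> intro h1 <;> [skip; skip] <;>
    · simp only [Nat.add_zero] at *
      omega

lemma exists_good (m L : ℕ) (hL : 0 < L) (h : Fin L → Bool) (hS : S m L h L = 1) :
    ∃ j, j < L ∧ Good m L h j := by
  obtain ⟨i0, hi0, hmin⟩ := Finset.exists_min_image (Finset.range L) (S m L h)
    ⟨0, Finset.mem_range.mpr hL⟩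
  set T := (Finset.range L).filter (fun i => S m L h i ≤ S m L h i0) with hT
  have hne : T.Nonempty := ⟨i0, Finset.mem_filter.mpr ⟨hi0, le_rfl⟩⟩
  set j := T.max' hne with hj
  have hjmem := T.max'_mem hne
  have hjL : j < L := Finset.mem_range.mp (Finset.mem_filter.mp hjmem).1
  have hjmin : S m L h j ≤ S m L h i0 := (Finset.mem_filter.mp hjmem).2
  have hjlow : ∀ i, i < L → S m L h j ≤ S m L h i := fun i hi =>
    le_trans hjmin (hmin i (Finset.mem_range.mpr hi))
  have hjlast : ∀ i, i < L → S m L h i ≤ S m L h i0 → i ≤ j := fun i hi hle =>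
    T.le_max' i (Finset.mem_filter.mpr ⟨Finset.mem_range.mpr hi, hle⟩)
  refine ⟨j, hjL, fun k hk1 hk2 => ?_⟩
  rcases lt_or_ge (j + k) L with hcase | hcase
  · refine lt_of_le_of_ne (hjlow _ hcase) fun heq => ?_
    have : j + k ≤ j := hjlast _ hcase (heq ▸ hjmin)
    omega
  · have hr : j + k - L < L := by omega
    have : S m L h (j + k) = S m L h (j + k - L) + 1 := by
      have := S_add_L m L h (j + k - L)
      rw [show j + k - L + L = j + k from by omega, hS] at this
      exact this
    rw [this]
    have := hjlow _ hr
    omega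

lemma good_unique (m L : ℕ) (h : Fin L → Bool) (hS : S m L h L = 1)
    {j j' : ℕ} (hj : j < L) (hj' : j' < L)
    (g1 : Good m L h j) (g2 : Good m L h j') : j = j' := by
  have aux : ∀ a b : ℕ, a < b → b < L → Good m L h a → Good m L h b → False := by
    intro a b hab hbL ga gb
    have h1 : S m L h a < S m L h b := by
      have := ga (b - a) (by omega) (by omega)
      rwa [show a + (b - a) = b from by omega] at this
    have h2 : S m L h b < S m L h a + 1 := by
      have := gb (a + L - b) (by omega) (by omega)
      rw [show b + (a + L - b) = a + L from by omega, S_add_L, hS] at this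
      exact this
    omega
  rcases lt_trichotomy j j' with hlt | heq | hgt
  · exact absurd (aux j j' hlt hj' g1 g2) (by simp)
  · exact heq
  · exact absurd (aux j' j hgt hj g2 g1) (by simp)


lemma S_counts (m : ℕ) {L' : ℕ} (w : Fin L' → Bool) {k : ℕ} (hk : k ≤ L') :
    S m L' w k + (m : ℤ) * (univ.filter fun i : Fin L' => (i : ℕ) < k ∧ w i = true).card
      = ((univ.filter fun i : Fin L' => (i : ℕ) < k ∧ w i = false).card : ℤ) := by
  have hT : ((univ.filter fun i : Fin L' => (i : ℕ) < k ∧ w i = true).card : ℤ)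
      = ∑ i : Fin L', if (i : ℕ) < k ∧ w i = true then (1 : ℤ) else 0 := by
    rw [Finset.card_filter]
    push_cast
    rfl
  have hF : ((univ.filter fun i : Fin L' => (i : ℕ) < k ∧ w i = false).card : ℤ)
      = ∑ i : Fin L', if (i : ℕ) < k ∧ w i = false then (1 : ℤ) else 0 := by
    rw [Finset.card_filter]
    push_cast
    rfl
  have key : S m L' w k = ∑ i : Fin L', if (i : ℕ) < k then val m (w i) else 0 := by
    have h1 : ∑ i : Fin L', (if (i : ℕ) < k then val m (gp L' w (i : ℕ)) else 0)
        = ∑ i ∈ Finset.range L', (if i < k then val m (gp L' w i) else 0) :=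
      Fin.sum_univ_eq_sum_range (fun i => if i < k then val m (gp L' w i) else 0) L'
    have h2 : ∀ i : Fin L', (if (i : ℕ) < k then val m (gp L' w (i : ℕ)) else 0)
        = (if (i : ℕ) < k then val m (w i) else 0) := by
      intro i
      rw [gp_lt w i.isLt]
    have h3 : ∑ i ∈ Finset.range L', (if i < k then val m (gp L' w i) else 0)
        = ∑ i ∈ (Finset.range L').filter (fun i => i < k), val m (gp L' w i) :=
      (Finset.sum_filter _ _).symm
    have h4 : (Finset.range L').filter (fun i => i < k) = Finset.range k := by
      ext i
      simp only [Finset.mem_filter, Finset.mem_range]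
      omega
    rw [S, ← h4, ← h3, ← h1]
    exact Finset.sum_congr rfl fun i _ => h2 i
  rw [key, hT, hF, Finset.mul_sum, ← Finset.sum_add_distrib]
  refine Finset.sum_congr rfl fun i _ => ?_
  by_cases h1 : (i : ℕ) < k <;> cases hw : w i <;> simp [val, h1, hw] <;> ring

lemma isBallot_iff (m n : ℕ) (w : Fin ((m + 1) * n) → Bool) :
    IsBallotWord m n w ↔ wt w = n ∧ ∀ k ≤ (m + 1) * n, 0 ≤ S m ((m + 1) * n) w k := by
  unfold IsBallotWord wt
  refine and_congr Iff.rfl ?_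
  refine forall₂_congr fun k hk => ?_
  have hc := S_counts m w hk
  constructor
  · intro hle
    have : ((m * (univ.filter fun i : Fin ((m + 1) * n) => (i : ℕ) < k ∧ w i = true).card : ℕ) : ℤ)
        ≤ ((univ.filter fun i : Fin ((m + 1) * n) => (i : ℕ) < k ∧ w i = false).card : ℤ) := by
      exact_mod_cast hle
    push_cast at this
    omega
  · intro hle
    have : ((m * (univ.filter fun i : Fin ((m + 1) * n) => (i : ℕ) < k ∧ w i = true).card : ℕ) : ℤ)
        ≤ ((univ.filter fun i : Fin ((m + 1) * n) => (i : ℕ) < k ∧ w i = false).card : ℤ) := by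
      push_cast
      omega
    exact_mod_cast this

lemma wt_cons {N : ℕ} (b : Bool) (w : Fin N → Bool) :
    wt (Fin.cons b w) = (if b = true then 1 else 0) + wt w := by
  rw [wt, wt, Finset.card_filter, Finset.card_filter, Fin.sum_univ_succ]
  simp

lemma S_cons (m N : ℕ) (w : Fin N → Bool) {k : ℕ} (hk : k ≤ N) :
    S m (N + 1) (Fin.cons b w) (k + 1) = val m b + S m N w k := by
  induction k with
  | zero =>
      rw [show (0 : ℕ) + 1 = 1 from rfl, S_succ]
      have h0 : gp (N + 1) (Fin.cons b w) 0 = b := by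
        rw [gp_lt _ (Nat.succ_pos N)]
        exact Fin.cons_zero _ _
      simp [S, h0]
  | succ k ih =>
      have hk' : k ≤ N := by omega
      rw [S_succ, ih hk', S_succ]
      have hg1 : gp (N + 1) (Fin.cons b w) (k + 1) = w ⟨k, by omega⟩ := by
        rw [gp_lt _ (by omega : k + 1 < N + 1)]
        have : (⟨k + 1, by omega⟩ : Fin (N + 1)) = Fin.succ ⟨k, by omega⟩ := rfl
        rw [this, Fin.cons_succ]
      have hg2 : gp N w k = w ⟨k, by omega⟩ := gp_lt _ (by omega)
      rw [hg1, hg2]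
      ring

lemma good_zero_iff (m n : ℕ) (h : Fin ((m + 1) * n + 1) → Bool) (hw : wt h = n) :
    Good m ((m + 1) * n + 1) h 0 ↔ (h 0 = false ∧ IsBallotWord m n (Fin.tail h)) := by
  have hS0 : S m ((m + 1) * n + 1) h 0 = 0 := by simp [S]
  have hS1 : S m ((m + 1) * n + 1) h 1 = val m (h 0) := by
    have h1 := S_succ m ((m + 1) * n + 1) h 0
    rw [hS0, zero_add, gp_lt _ (Nat.succ_pos _)] at h1
    simpa using h1
  constructor
  · intro hg
    have hgood : ∀ k, 0 < k → k ≤ (m + 1) * n + 1 → 0 < S m ((m + 1) * n + 1) h k := by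
      intro k h1 h2
      have := hg k h1 h2
      rwa [zero_add, hS0] at this
    have h0 : h 0 = false := by
      have h1 := hgood 1 one_pos (by omega)
      rw [hS1] at h1
      cases hh : h 0
      · rfl
      · rw [hh] at h1
        have hv : val m true = -(m : ℤ) := rfl
        rw [hv] at h1
        have : (0 : ℤ) ≤ (m : ℤ) := Int.natCast_nonneg m
        linarith
    have hh : Fin.cons false (Fin.tail h) = h := by
      rw [← h0]
      exact Fin.cons_self_tail h
    refine ⟨h0, (isBallot_iff m n (Fin.tail h)).mpr ⟨?_, ?_⟩⟩
    · have hwc := wt_cons false (Fin.tail h)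
      rw [hh] at hwc
      simpa [hw] using hwc.symm
    · intro k hk
      have h1 := hgood (k + 1) (Nat.succ_pos k) (by omega)
      have h2 : S m ((m + 1) * n + 1) h (k + 1)
          = val m false + S m ((m + 1) * n) (Fin.tail h) k := by
        conv_lhs => rw [← hh]
        exact S_cons m ((m + 1) * n) (Fin.tail h) hk
      rw [h2] at h1
      simp only [val, if_neg (by simp : ¬ (false = true))] at h1
      omega
  · rintro ⟨h0, hb⟩
    obtain ⟨hw', hSnn⟩ := (isBallot_iff m n (Fin.tail h)).mp hb
    have hh : Fin.cons false (Fin.tail h) = h := by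
      rw [← h0]
      exact Fin.cons_self_tail h
    intro k h1 h2
    rw [zero_add, hS0]
    obtain ⟨k', rfl⟩ : ∃ k', k = k' + 1 := ⟨k - 1, by omega⟩
    have hk' : k' ≤ (m + 1) * n := by omega
    have h3 : S m ((m + 1) * n + 1) h (k' + 1)
        = val m false + S m ((m + 1) * n) (Fin.tail h) k' := by
      conv_lhs => rw [← hh]
      exact S_cons m ((m + 1) * n) (Fin.tail h) hk'
    rw [h3]
    have := hSnn k' hk'
    simp only [val, if_neg (by simp : ¬ (false = true))]
    omega


lemma card_wt_eq (L n : ℕ) :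
    ((univ : Finset (Fin L → Bool)).filter fun h => wt h = n).card = Nat.choose L n := by
  have hpc : Nat.choose L n = (Finset.powersetCard n (univ : Finset (Fin L))).card := by
    rw [Finset.card_powersetCard]
    simp
  rw [hpc]
  refine Finset.card_nbij' (fun h => univ.filter fun i => h i = true)
    (fun s => fun i => decide (i ∈ s)) ?_ ?_ ?_ ?_
  · intro h hh
    rw [Finset.mem_coe, Finset.mem_powersetCard_univ]
    exact (Finset.mem_filter.mp hh).2
  · intro s hs
    rw [Finset.mem_coe, Finset.mem_powersetCard_univ] at hs
    refine Finset.mem_filter.mpr ⟨Finset.mem_univ _, ?_⟩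
    rw [wt, ← hs]
    congr 1
    ext i
    simp
  · intro h hh
    funext i
    cases hi : h i <;> simp [hi]
  · intro s hs
    ext i
    simp

lemma key_count (m n : ℕ) :
    Nat.choose ((m + 1) * n + 1) n
      = ((m + 1) * n + 1) *
        ((univ : Finset (Fin ((m + 1) * n) → Bool)).filter fun f => IsBallotWord m n f).card := by
  set L := (m + 1) * n + 1 with hLdef
  have hL : 0 < L := Nat.succ_pos _
  let gi : (Fin L → Bool) → ℕ := fun g =>
    if hg : ∃ j, j < L ∧ Good m L g j then hg.choose else 0
  have gi_spec : ∀ g : Fin L → Bool, (∃ j, j < L ∧ Good m L g j) →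
      gi g < L ∧ Good m L g (gi g) := by
    intro g hg
    simp only [gi, dif_pos hg]
    exact hg.choose_spec
  rw [← card_wt_eq L n]
  have hcard : ((univ : Finset (Fin L → Bool)).filter fun h => wt h = n).card
      = ((univ : Finset (Fin L)) ×ˢ
          ((univ : Finset (Fin ((m + 1) * n) → Bool)).filter fun f => IsBallotWord m n f)).card := by
    refine Finset.card_nbij'
      (fun g => (⟨gi g % L, Nat.mod_lt _ hL⟩, Fin.tail (rot L (gi g) g)))
      (fun p => rot L (L - (p.1 : ℕ)) (Fin.cons false p.2))
      ?_ ?_ ?_ ?_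
    · intro g hg
      have hw : wt g = n := (Finset.mem_filter.mp hg).2
      have hex := exists_good m L hL g (S_L_eq_one m n g hw)
      obtain ⟨hjL, hjg⟩ := gi_spec g hex
      have hgood0 : Good m L (rot L (gi g) g) 0 := (good_rot_iff m L hL g (gi g)).mpr hjg
      have hwrot : wt (rot L (gi g) g) = n := by rw [wt_rot m]; exact hw
      have hball := ((good_zero_iff m n _ hwrot).mp hgood0).2
      rw [Finset.mem_coe, Finset.mem_product]
      exact ⟨Finset.mem_univ _, Finset.mem_filter.mpr ⟨Finset.mem_univ _, hball⟩⟩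
    · intro p hp
      have hb : IsBallotWord m n p.2 :=
        (Finset.mem_filter.mp (Finset.mem_product.mp hp).2).2
      have hw2 : wt p.2 = n := hb.1
      refine Finset.mem_filter.mpr ⟨Finset.mem_univ _, ?_⟩
      rw [wt_rot m, wt_cons]
      simpa using hw2
    · intro g hg
      have hw : wt g = n := (Finset.mem_filter.mp hg).2
      have hex := exists_good m L hL g (S_L_eq_one m n g hw)
      obtain ⟨hjL, hjg⟩ := gi_spec g hex
      have hmod : gi g % L = gi g := Nat.mod_eq_of_lt hjL
      have hgood0 : Good m L (rot L (gi g) g) 0 := (good_rot_iff m L hL g (gi g)).mpr hjg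
      have hwrot : wt (rot L (gi g) g) = n := by rw [wt_rot m]; exact hw
      have h0 := ((good_zero_iff m n _ hwrot).mp hgood0).1
      have hcons : Fin.cons false (Fin.tail (rot L (gi g) g)) = rot L (gi g) g := by
        conv_rhs => rw [← Fin.cons_self_tail (rot L (gi g) g)]
        rw [h0]
      show rot L (L - (gi g % L)) (Fin.cons false (Fin.tail (rot L (gi g) g))) = g
      rw [hmod, hcons, rot_inv L hL (le_of_lt hjL)]
    · rintro ⟨j0, w0⟩ hp
      have hb : IsBallotWord m n w0 :=
        (Finset.mem_filter.mp (Finset.mem_product.mp hp).2).2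
      have hw2 : wt w0 = n := hb.1
      have hjlt : (j0 : ℕ) < L := j0.isLt
      have hrotg : rot L (j0 : ℕ) (rot L (L - (j0 : ℕ)) (Fin.cons false w0))
          = Fin.cons false w0 := by
        rw [rot_rot L hL, show (L - (j0 : ℕ)) + (j0 : ℕ) = L from by omega, rot_L L hL]
      have hwcons : wt (Fin.cons false w0) = n := by
        rw [wt_cons]
        simpa using hw2
      have hwg : wt (rot L (L - (j0 : ℕ)) (Fin.cons false w0)) = n := by
        rw [wt_rot m]
        exact hwcons
      have hgood0 : Good m L (Fin.cons false w0) 0 := by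
        refine (good_zero_iff m n _ hwcons).mpr ⟨Fin.cons_zero _ _, ?_⟩
        rw [Fin.tail_cons]
        exact hb
      have hgoodj : Good m L (rot L (L - (j0 : ℕ)) (Fin.cons false w0)) (j0 : ℕ) :=
        (good_rot_iff m L hL _ (j0 : ℕ)).mp (by rw [hrotg]; exact hgood0)
      have hex : ∃ j, j < L ∧ Good m L (rot L (L - (j0 : ℕ)) (Fin.cons false w0)) j :=
        ⟨(j0 : ℕ), hjlt, hgoodj⟩
      obtain ⟨hgiL, hgig⟩ := gi_spec _ hex
      have hgi : gi (rot L (L - (j0 : ℕ)) (Fin.cons false w0)) = (j0 : ℕ) :=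
        good_unique m L _ (S_L_eq_one m n _ hwg) hgiL hjlt hgig hgoodj
      simp only [Prod.mk.injEq]
      constructor
      · apply Fin.ext
        simp [hgi, Nat.mod_eq_of_lt hjlt]
      · rw [hgi, hrotg, Fin.tail_cons]
  rw [hcard, Finset.card_product, Finset.card_univ]
  simp

end BallotCycle

open scoped Classical in
theorem stmt_7 (m n : ℕ) (hm : 1 ≤ m) :
    (m * n + 1) *
      (Finset.univ.filter fun f : Fin ((m + 1) * n) → Bool => IsBallotWord m n f).card
      = Nat.choose ((m + 1) * n) n := by
  have key := BallotCycle.key_count m n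
  have h1 : ((m + 1) * n).choose n * ((m + 1) * n + 1)
      = ((m + 1) * n + 1).choose n * ((m + 1) * n + 1 - n) :=
    Nat.choose_mul_succ_eq _ _
  have h2 : (m + 1) * n + 1 - n = m * n + 1 := by
    have : (m + 1) * n = m * n + n := by ring
    omega
  have hpos : 0 < (m + 1) * n + 1 := Nat.succ_pos _
  set cB := (Finset.univ.filter fun f : Fin ((m + 1) * n) → Bool => IsBallotWord m n f).card with hcB
  have h3 : ((m * n + 1) * cB) * ((m + 1) * n + 1) = ((m + 1) * n).choose n * ((m + 1) * n + 1) := by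
    rw [h1, h2, key]
    ring
  exact Nat.eq_of_mul_eq_mul_right hpos h3
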